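/- The number of terrain-like graphs on vertex set [n] is divisible by 2^{n-1}. -/

import Mathlib

/-- A graph on vertex set `[n]` (vertices `Fin n` in increasing order) is terrain-like
if it satisfies the X-property. -/
def TerrainLike {n : ℕ} (G : SimpleGraph (Fin n)) : Prop :=
  ∀ a b c d : Fin n, a < b → b < c → c < d → G.Adj a c → G.Adj b d → G.Adj a d

/-- The order `⪯` on pairs `(a,b)` with `a < b`: `{a,b} ⪯ {c,d}` iff `c ≤ a < b ≤ d`. -/
def PairLE {n : ℕ} (e f : Fin n × Fin n) : Prop :=
  f.1 ≤ e.1 ∧ e.2 ≤ f.2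

/-- `τ({a,b})` is the transposition `(2a, 2b-1)` of `[2n]`; here vertices and the
elements of `[2n]` are 0-indexed, so it swaps the 0-based positions `2a+1` and `2b`. -/
def tau {n : ℕ} (e : Fin n × Fin n) : Equiv.Perm (Fin (2 * n)) :=
  Equiv.swap ⟨2 * e.1.val + 1, by have := e.1.isLt; omega⟩
    ⟨2 * e.2.val, by have := e.2.isLt; omega⟩

/-- `π₀ = (1,2)(3,4)⋯(2n-1,2n)` (0-indexed: swaps `2i` and `2i+1` for each `i < n`). -/
def pi0 (n : ℕ) : Equiv.Perm (Fin (2 * n)) :=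
  (List.ofFn (fun i : Fin n =>
    Equiv.swap ⟨2 * i.val, by have := i.isLt; omega⟩
      ⟨2 * i.val + 1, by have := i.isLt; omega⟩)).prod

/-- Dumont derangements of the second kind, on `Fin (2*n)` (0-indexed version of `[2n]`):
`π(2i-1) ≥ 2i-1`, `π(2i) < 2i` for `i ∈ [n]`, and `π(2i-1) > 2i-1` for `i ∈ [n-1]`. -/
def IsDumontDerangement {n : ℕ} (π : Equiv.Perm (Fin (2 * n))) : Prop :=
  (∀ i : Fin (2 * n), i.val % 2 = 0 → i.val ≤ (π i).val) ∧
  (∀ i : Fin (2 * n), i.val % 2 = 1 → (π i).val < i.val) ∧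
  (∀ i : Fin (2 * n), i.val % 2 = 0 → i.val < 2 * n - 2 → i.val < (π i).val)

/-- `i` and `j` are in edge configuration in `π` iff
`π⁻¹(i) < π⁻¹(j) ⟺ π⁻¹(i) ≡ π⁻¹(j) (mod 2)`. -/
def EdgeConfig {m : ℕ} (π : Equiv.Perm (Fin m)) (i j : Fin m) : Prop :=
  (π.symm i).val < (π.symm j).val ↔ (π.symm i).val % 2 = (π.symm j).val % 2

/-- A list `e₁ > ⋯ > e_m` of the edges of `G` (as pairs `(a,b)`, `a < b`), ordered
descendingly with respect to a valid linear order (one extending `⪯`): no earlier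
element is `⪯`-below a later one. -/
def ValidEdgeList {n : ℕ} (G : SimpleGraph (Fin n)) (l : List (Fin n × Fin n)) : Prop :=
  l.Nodup ∧ (∀ e : Fin n × Fin n, e ∈ l ↔ (e.1 < e.2 ∧ G.Adj e.1 e.2)) ∧
  l.Pairwise (fun e f => ¬ PairLE e f)

/-- `Π(G) = τ(e_m)⋯τ(e₁)π₀` for an edge list `[e₁,…,e_m]`. -/
def permOfList {n : ℕ} (l : List (Fin n × Fin n)) : Equiv.Perm (Fin (2 * n)) :=
  (l.reverse.map tau).prod * pi0 n

open Classical in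
noncomputable def shortFun {n : ℕ} (G : SimpleGraph (Fin n)) (i : Fin (n - 1)) : Bool :=
  decide (G.Adj ⟨i.val, by have := i.isLt; omega⟩ ⟨i.val + 1, by have := i.isLt; omega⟩)

def longPart {n : ℕ} (G : SimpleGraph (Fin n)) : SimpleGraph (Fin n) where
  Adj a b := G.Adj a b ∧ a.val + 1 ≠ b.val ∧ b.val + 1 ≠ a.val
  symm := ⟨fun a b ⟨h, h1, h2⟩ => ⟨h.symm, h2, h1⟩⟩
  loopless := ⟨fun a ⟨h, _, _⟩ => G.irrefl h⟩

def extBool {n : ℕ} (f : Fin (n - 1) → Bool) (k : ℕ) : Bool :=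
  if h : k < n - 1 then f ⟨k, h⟩ else false

def withShort {n : ℕ} (H : SimpleGraph (Fin n)) (f : Fin (n - 1) → Bool) :
    SimpleGraph (Fin n) where
  Adj a b := H.Adj a b ∨ (a.val + 1 = b.val ∧ extBool f a.val = true)
    ∨ (b.val + 1 = a.val ∧ extBool f b.val = true)
  symm := by
    constructor
    intro a b h
    rcases h with h | h | h
    · exact Or.inl h.symm
    · exact Or.inr (Or.inr h)
    · exact Or.inr (Or.inl h)
  loopless := by
    constructor
    intro a h
    rcases h with h | h | h
    · exact H.irrefl h
    · omega
    · omega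

lemma terrainLike_iff_longAgree {n : ℕ} {G H : SimpleGraph (Fin n)}
    (h : ∀ a b : Fin n, a.val + 2 ≤ b.val → (G.Adj a b ↔ H.Adj a b)) :
    TerrainLike G ↔ TerrainLike H := by
  constructor <;> intro tl a b c d hab hbc hcd h1 h2
  · rw [Fin.lt_def] at hab hbc hcd
    rw [← h a d (by omega)]
    exact tl a b c d (by rwa [Fin.lt_def]) (by rwa [Fin.lt_def]) (by rwa [Fin.lt_def])
      ((h a c (by omega)).mpr h1) ((h b d (by omega)).mpr h2)
  · rw [Fin.lt_def] at hab hbc hcd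
    rw [h a d (by omega)]
    exact tl a b c d (by rwa [Fin.lt_def]) (by rwa [Fin.lt_def]) (by rwa [Fin.lt_def])
      ((h a c (by omega)).mp h1) ((h b d (by omega)).mp h2)

lemma terrainLike_longPart {n : ℕ} (G : SimpleGraph (Fin n)) :
    TerrainLike (longPart G) ↔ TerrainLike G := by
  apply terrainLike_iff_longAgree
  intro a b hab
  simp only [longPart]
  constructor
  · exact fun h => h.1
  · intro h; exact ⟨h, by omega, by omega⟩

lemma terrainLike_withShort {n : ℕ} (H : SimpleGraph (Fin n)) (f : Fin (n - 1) → Bool) :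
    TerrainLike (withShort H f) ↔ TerrainLike H := by
  apply terrainLike_iff_longAgree
  intro a b hab
  simp only [withShort]
  constructor
  · rintro (h | h | h)
    · exact h
    · omega
    · omega
  · exact fun h => Or.inl h

lemma extBool_shortFun {n : ℕ} (G : SimpleGraph (Fin n)) (a b : Fin n)
    (h : a.val + 1 = b.val) : (extBool (shortFun G) a.val = true) ↔ G.Adj a b := by
  have ha : a.val < n - 1 := by have := b.isLt; omega
  have e1 : (⟨a.val, by omega⟩ : Fin n) = a := rfl
  have e2 : (⟨a.val + 1, by have := b.isLt; omega⟩ : Fin n) = b := Fin.ext h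
  simp only [extBool, ha, dif_pos, shortFun, decide_eq_true_eq, e1, e2]

noncomputable def terrainEquiv (n : ℕ) :
    {G : SimpleGraph (Fin n) // TerrainLike G} ≃
      ({H : SimpleGraph (Fin n) // TerrainLike H ∧
          ∀ a b : Fin n, a.val + 1 = b.val → ¬ H.Adj a b} × (Fin (n - 1) → Bool)) where
  toFun G := (⟨longPart G.1, (terrainLike_longPart G.1).mpr G.2,
      fun a b hab (h : G.1.Adj a b ∧ a.val + 1 ≠ b.val ∧ b.val + 1 ≠ a.val) => h.2.1 hab⟩, shortFun G.1)
  invFun p := ⟨withShort p.1.1 p.2, (terrainLike_withShort p.1.1 p.2).mpr p.1.2.1⟩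
  left_inv := by
    rintro ⟨G, hG⟩
    apply Subtype.ext
    ext a b
    simp only [withShort, longPart]
    constructor
    · rintro (⟨h, -, -⟩ | ⟨h, hf⟩ | ⟨h, hf⟩)
      · exact h
      · exact (extBool_shortFun G a b h).mp hf
      · exact ((extBool_shortFun G b a h).mp hf).symm
    · intro h
      by_cases h1 : a.val + 1 = b.val
      · exact Or.inr (Or.inl ⟨h1, (extBool_shortFun G a b h1).mpr h⟩)
      · by_cases h2 : b.val + 1 = a.val
        · exact Or.inr (Or.inr ⟨h2, (extBool_shortFun G b a h2).mpr h.symm⟩)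
        · exact Or.inl ⟨h, h1, h2⟩
  right_inv := by
    rintro ⟨⟨H, hH, hshort⟩, f⟩
    refine Prod.ext ?_ ?_
    · apply Subtype.ext
      ext a b
      simp only [longPart, withShort]
      constructor
      · rintro ⟨h | ⟨h, -⟩ | ⟨h, -⟩, h1, h2⟩
        · exact h
        · exact absurd h h1
        · exact absurd h h2
      · intro h
        refine ⟨Or.inl h, fun h1 => hshort a b h1 h, fun h2 => hshort b a h2 h.symm⟩
    · funext i
      have hi := i.isLt
      have hH1 : ¬ H.Adj ⟨i.val, by omega⟩ ⟨i.val + 1, by omega⟩ :=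
        hshort _ _ rfl
      have he : extBool f i.val = f i := by
        simp only [extBool, hi, dif_pos]
      have key : ((withShort H f).Adj ⟨i.val, by omega⟩ ⟨i.val + 1, by omega⟩) ↔
          (f i = true) := by
        simp only [withShort, hH1, he, false_or]
        constructor
        · rintro (⟨-, h⟩ | ⟨h, -⟩)
          · exact h
          · omega
        · exact fun h => Or.inl ⟨by trivial, h⟩
      simp only [shortFun]
      cases hfi : f i
      · simp only [hfi] at key
        simp [key]
      · simp only [hfi] at key
        simp [key]

/-- The number of terrain-like graphs on `[n]` is divisible by `2^(n-1)`. -/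
theorem two_pow_dvd_card_terrainLike (n : ℕ) (hn : 1 ≤ n) :
    2 ^ (n - 1) ∣ Nat.card {G : SimpleGraph (Fin n) // TerrainLike G} := by
  refine ⟨Nat.card {H : SimpleGraph (Fin n) // TerrainLike H ∧
      ∀ a b : Fin n, a.val + 1 = b.val → ¬ H.Adj a b}, ?_⟩
  rw [Nat.card_congr (terrainEquiv n), Nat.card_prod]
  simp [Nat.card_eq_fintype_card, mul_comm]
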